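/- arXiv:2204.01473 — 5 statements merged into one kernel-verified Lean document; each statement's English description precedes it below -/
import Mathlib

section
/- Let m be a positive half-integer, s a half-integer, and j a negative integer. Then for all τ in the upper half-plane and z1, z2 ∈ ℂ (with all denominators nonzero): (i) Φ^{[m,s+j]}_1(τ,z1,z2,0) = Φ^{[m,s]}_1(τ,z1,z2,0) + Σ_{k=j}^{−1} e^{πi(s+k)(z1−z2)} q^{−(s+k)²/(4m)} θ_{s+k,m}(τ, z1+z2); (ii) Φ^{[m,s+j]}_2(τ,z1,z2,0) = Φ^{[m,s]}_2(τ,z1,z2,0) + Σ_{k=j}^{−1} e^{πi(s+k)(z1−z2)} q^{−(s+k)²/(4m)} θ_{−(s+k),m}(τ, z1+z2); (iii) Φ^{[m,s+j]}(τ,z1,z2,0) = Φ^{[m,s]}(τ,z1,z2,0) + Σ_{k=j}^{−1} e^{πi(s+k)(z1−z2)} q^{−(s+k)²/(4m)} [θ_{s+k,m} − θ_{−(s+k),m}](τ, z1+z2). -/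
open Complex

noncomputable section

namespace Wakimoto

/-- `qpow τ x = e^{2πiτx}`, i.e. `q^x` where `q = e^{2πiτ}`. -/
def qpow (τ x : ℂ) : ℂ := Complex.exp (2 * Real.pi * Complex.I * τ * x)

/-- `e2 z = e^{2πiz}`. -/
def e2 (z : ℂ) : ℂ := Complex.exp (2 * Real.pi * Complex.I * z)

/-- The mock theta function `Φ^{[m,s]}_1`. -/
def Phi1 (m s : ℂ) (τ z1 z2 t : ℂ) : ℂ :=
  Complex.exp (-(2 * Real.pi * Complex.I) * m * t) *
    ∑' j : ℤ,
      Complex.exp (2 * Real.pi * Complex.I * (m * (j : ℂ) * (z1 + z2) + s * z1)) *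
          qpow τ (m * (j : ℂ) ^ 2 + s * (j : ℂ)) /
        (1 - e2 z1 * qpow τ (j : ℂ))

/-- The mock theta function `Φ^{[m,s]}_2`. -/
def Phi2 (m s : ℂ) (τ z1 z2 t : ℂ) : ℂ :=
  Complex.exp (-(2 * Real.pi * Complex.I) * m * t) *
    ∑' j : ℤ,
      Complex.exp (-(2 * Real.pi * Complex.I) * (m * (j : ℂ) * (z1 + z2) + s * z2)) *
          qpow τ (m * (j : ℂ) ^ 2 + s * (j : ℂ)) /
        (1 - e2 (-z2) * qpow τ (j : ℂ))

/-- `Φ^{[m,s]} = Φ^{[m,s]}_1 - Φ^{[m,s]}_2`. -/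
def Phi (m s : ℂ) (τ z1 z2 t : ℂ) : ℂ :=
  Phi1 m s τ z1 z2 t - Phi2 m s τ z1 z2 t

/-- Jacobi's theta function `θ_{k,m}`. -/
def jTheta (k m : ℂ) (τ z : ℂ) : ℂ :=
  ∑' j : ℤ,
    Complex.exp (2 * Real.pi * Complex.I * (m * ((j : ℂ) + k / (2 * m)) * z)) *
      qpow τ (m * ((j : ℂ) + k / (2 * m)) ^ 2)

/-- The signed theta function `θ^{(-)}_{k,m}`. -/
def jThetaM (k m : ℂ) (τ z : ℂ) : ℂ :=
  ∑' j : ℤ,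
    (-1 : ℂ) ^ j *
      Complex.exp (2 * Real.pi * Complex.I * (m * ((j : ℂ) + k / (2 * m)) * z)) *
      qpow τ (m * ((j : ℂ) + k / (2 * m)) ^ 2)

/-- The Dedekind eta function. -/
def eta (τ : ℂ) : ℂ := qpow τ (1 / 24) * ∏' n : ℕ, (1 - qpow τ ((n : ℂ) + 1))

/-- The Mumford theta functions `ϑ_{ab}`. -/
def mumford (a b : ℕ) (τ z : ℂ) : ℂ :=
  ∑' n : ℤ,
    Complex.exp (Real.pi * Complex.I * τ * ((n : ℂ) + (a : ℂ) / 2) ^ 2 +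
      2 * Real.pi * Complex.I * ((n : ℂ) + (a : ℂ) / 2) * (z + (b : ℂ) / 2))

/-- `z` lies in the lattice `ℤ + ℤτ`. -/
def InLattice (τ z : ℂ) : Prop := ∃ a b : ℤ, z = (a : ℂ) + (b : ℂ) * τ

private lemma gauss_nat (a b : ℝ) (hb : 0 < b) :
    Summable fun n : ℕ => Real.exp (a * n - b * n ^ 2) := by
  have hr : Real.exp (-(b/2)) < 1 := Real.exp_lt_one_iff.mpr (by linarith)
  refine Summable.of_nonneg_of_le (fun n => (Real.exp_pos _).le) ?_
    (((summable_geometric_of_lt_one (Real.exp_pos _).le hr)).mul_left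
      (Real.exp ((a + b/2)^2/(2*b))))
  intro n
  rw [← Real.exp_nat_mul, ← Real.exp_add, Real.exp_le_exp]
  have h : (a*(n:ℝ) - b*(n:ℝ)^2) - ((n:ℝ) * -(b/2)) ≤ (a+b/2)^2/(2*b) := by
    rw [sub_le_iff_le_add, ← sub_le_iff_le_add', div_eq_mul_inv, ← sub_nonneg]
    have h2 : (0:ℝ) < 2*b := by linarith
    have hc : (2*b) * (2*b)⁻¹ = 1 := mul_inv_cancel₀ h2.ne'
    nlinarith [sq_nonneg (2*b*(n:ℝ) - (a + b/2)), h2, hc]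
  linarith

private lemma gauss_int (a b : ℝ) (hb : 0 < b) :
    Summable fun j : ℤ => Real.exp (a * j - b * j ^ 2) := by
  refine Summable.of_nat_of_neg ((gauss_nat a b hb).congr fun n => by push_cast; ring_nf)
    ((gauss_nat (-a) b hb).congr fun n => ?_)
  push_cast
  ring_nf

private lemma norm_qpow (τ : ℂ) (r : ℝ) : ‖qpow τ (r:ℂ)‖ = Real.exp (-(2*Real.pi*τ.im*r)) := by
  rw [qpow, Complex.norm_exp]
  congr 1
  simp [Complex.mul_re, Complex.mul_im]

private lemma denom_ne_of_not_lattice (τ z : ℂ) (hz : ¬ InLattice τ z) (j : ℤ) :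
    1 - e2 z * qpow τ (j:ℂ) ≠ 0 := by
  intro h
  apply hz
  rw [sub_eq_zero] at h
  have h1 : Complex.exp (2*Real.pi*Complex.I*z + 2*Real.pi*Complex.I*τ*j) = 1 := by
    rw [Complex.exp_add]; exact h.symm
  rw [Complex.exp_eq_one_iff] at h1
  obtain ⟨n, hn⟩ := h1
  have hπ : (2*(Real.pi:ℂ)*Complex.I) ≠ 0 := by
    simp [Real.pi_ne_zero, Complex.I_ne_zero, Complex.ofReal_ne_zero]
  have h2 : (2*(Real.pi:ℂ)*Complex.I) * (z + τ*j - n) = 0 := by linear_combination hn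
  have h3 : z + τ*(j:ℂ) - n = 0 := by
    rcases mul_eq_zero.mp h2 with h | h
    · exact absurd h hπ
    · exact h
  exact ⟨n, -j, by push_cast; linear_combination h3⟩

private lemma denom2_ne_of_not_lattice (τ z : ℂ) (hz : ¬ InLattice τ z) (j : ℤ) :
    1 - e2 (-z) * qpow τ (j:ℂ) ≠ 0 := by
  intro h
  apply hz
  rw [sub_eq_zero] at h
  have h1 : Complex.exp (2*Real.pi*Complex.I*(-z) + 2*Real.pi*Complex.I*τ*j) = 1 := by
    rw [Complex.exp_add]; exact h.symm
  rw [Complex.exp_eq_one_iff] at h1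
  obtain ⟨n, hn⟩ := h1
  have hπ : (2*(Real.pi:ℂ)*Complex.I) ≠ 0 := by
    simp [Real.pi_ne_zero, Complex.I_ne_zero, Complex.ofReal_ne_zero]
  have h2 : (2*(Real.pi:ℂ)*Complex.I) * (-z + τ*j - n) = 0 := by linear_combination hn
  have h3 : -z + τ*(j:ℂ) - n = 0 := by
    rcases mul_eq_zero.mp h2 with h | h
    · exact absurd h hπ
    · exact h
  exact ⟨-n, j, by push_cast; linear_combination -h3⟩

private lemma denom_bound (τ : ℂ) (hτ : 0 < τ.im) (z : ℂ)
    (hz : ∀ j : ℤ, 1 - e2 z * qpow τ (j:ℂ) ≠ 0) :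
    ∃ δ : ℝ, 0 < δ ∧ ∀ j : ℤ, δ ≤ ‖1 - e2 z * qpow τ (j:ℂ)‖ := by
  set y : ℝ := 2*Real.pi*τ.im with hy
  have hy0 : 0 < y := by positivity
  set A : ℝ := ‖e2 z‖ with hA
  have hA0 : 0 < A := norm_pos_iff.mpr (Complex.exp_ne_zero _)
  have hnorm : ∀ j : ℤ, ‖e2 z * qpow τ (j:ℂ)‖ = A * Real.exp (-(y*j)) := by
    intro j
    rw [norm_mul, show ((j:ℂ)) = (((j:ℝ)):ℂ) by push_cast; ring, norm_qpow]
  obtain ⟨N, hN⟩ := exists_nat_gt (max (Real.log (2*A) / y) (Real.log (2/A) / y))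
  have hN1 : Real.log (2*A) < y * N :=
    (div_lt_iff₀ hy0).mp (lt_of_le_of_lt (le_max_left _ _) hN) |>.trans_eq (mul_comm _ _)
  have hN2 : Real.log (2/A) < y * N :=
    (div_lt_iff₀ hy0).mp (lt_of_le_of_lt (le_max_right _ _) hN) |>.trans_eq (mul_comm _ _)
  have hup : ∀ j : ℤ, (N:ℤ) < j → A * Real.exp (-(y*j)) ≤ 1/2 := by
    intro j hj
    have hjN : (N:ℝ) ≤ (j:ℝ) := by exact_mod_cast hj.le
    have h2A : 2*A < Real.exp (y*j) := by
      calc 2*A = Real.exp (Real.log (2*A)) := (Real.exp_log (by positivity)).symm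
        _ < Real.exp (y*j) := Real.exp_lt_exp.mpr (by nlinarith)
    have hej : (0:ℝ) < Real.exp (y*j) := Real.exp_pos _
    rw [Real.exp_neg, ← div_eq_mul_inv, div_le_div_iff₀ hej (by norm_num : (0:ℝ) < 2)] at *
    linarith
  have hdown : ∀ j : ℤ, j < -(N:ℤ) → 2 ≤ A * Real.exp (-(y*j)) := by
    intro j hj
    have hjN : (j:ℝ) ≤ -(N:ℝ) := by exact_mod_cast hj.le
    have h2A : 2/A < Real.exp (-(y*j)) := by
      calc 2/A = Real.exp (Real.log (2/A)) := (Real.exp_log (by positivity)).symm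
        _ < Real.exp (-(y*j)) := Real.exp_lt_exp.mpr (by nlinarith)
    rw [div_lt_iff₀ hA0] at h2A
    linarith [mul_comm A (Real.exp (-(y*j)))]
  set F := Finset.Icc (-(N:ℤ)) (N:ℤ) with hF
  have hFne : F.Nonempty := ⟨0, by simp [hF]⟩
  set δ0 := F.inf' hFne (fun j => ‖1 - e2 z * qpow τ (j:ℂ)‖) with hδ0def
  have hδ0 : 0 < δ0 := by
    rw [hδ0def, Finset.lt_inf'_iff]
    exact fun j _ => norm_pos_iff.mpr (hz j)
  refine ⟨min (1/2) δ0, lt_min (by norm_num) hδ0, fun j => ?_⟩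
  rcases lt_trichotomy j (-(N:ℤ)) with h | h | h
  · refine le_trans (min_le_left _ _) ?_
    have := hdown j h
    have h1 : 1 ≤ ‖e2 z * qpow τ (j:ℂ)‖ - ‖(1:ℂ)‖ := by
      rw [hnorm j, norm_one]; linarith
    calc (1:ℝ)/2 ≤ 1 := by norm_num
      _ ≤ ‖e2 z * qpow τ (j:ℂ)‖ - ‖(1:ℂ)‖ := h1
      _ ≤ ‖e2 z * qpow τ (j:ℂ) - 1‖ := norm_sub_norm_le _ _
      _ = ‖1 - e2 z * qpow τ (j:ℂ)‖ := norm_sub_rev _ _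
  · refine le_trans (min_le_right _ _) ?_
    exact Finset.inf'_le _ (by simp [hF]; omega)
  · rcases le_or_gt j (N:ℤ) with h' | h'
    · refine le_trans (min_le_right _ _) ?_
      exact Finset.inf'_le _ (by simp [hF]; omega)
    · refine le_trans (min_le_left _ _) ?_
      have := hup j h'
      calc (1:ℝ)/2 = ‖(1:ℂ)‖ - 1/2 := by norm_num
        _ ≤ ‖(1:ℂ)‖ - ‖e2 z * qpow τ (j:ℂ)‖ := by rw [hnorm j]; linarith
        _ ≤ ‖1 - e2 z * qpow τ (j:ℂ)‖ := norm_sub_norm_le _ _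

private lemma summable_main (m s : ℝ) (hm : 0 < m) (τ : ℂ) (hτ : 0 < τ.im) (c0 c1 z : ℂ)
    (hz : ∀ j : ℤ, 1 - e2 z * qpow τ (j:ℂ) ≠ 0) :
    Summable fun j : ℤ => Complex.exp (c1 * (j:ℂ) + c0) *
      qpow τ ((m:ℂ) * (j:ℂ)^2 + (s:ℂ)*(j:ℂ)) / (1 - e2 z * qpow τ (j:ℂ)) := by
  obtain ⟨δ, hδ, hb⟩ := denom_bound τ hτ z hz
  set y : ℝ := 2*Real.pi*τ.im with hy
  have hy0 : 0 < y := by positivity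
  refine Summable.of_norm_bounded
    (g := fun j : ℤ => (Real.exp c0.re / δ) * Real.exp ((c1.re - y*s) * j - (y*m) * j^2))
    ((gauss_int _ _ (by positivity)).mul_left _) fun j => ?_
  rw [norm_div, norm_mul]
  have h1 : ‖Complex.exp (c1 * (j:ℂ) + c0)‖ = Real.exp (c1.re * j + c0.re) := by
    rw [Complex.norm_exp]
    congr 1
    simp [Complex.add_re, Complex.mul_re]
  have h2 : ‖qpow τ ((m:ℂ) * (j:ℂ)^2 + (s:ℂ)*(j:ℂ))‖ = Real.exp (-(y*(m*j^2+s*j))) := by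
    rw [show ((m:ℂ) * (j:ℂ)^2 + (s:ℂ)*(j:ℂ)) = (((m*(j:ℝ)^2+s*(j:ℝ)):ℝ):ℂ) by push_cast; ring,
      norm_qpow]
  rw [h1, h2]
  calc Real.exp (c1.re * j + c0.re) * Real.exp (-(y*(m*j^2+s*j))) / ‖1 - e2 z * qpow τ (j:ℂ)‖
      ≤ Real.exp (c1.re * j + c0.re) * Real.exp (-(y*(m*j^2+s*j))) / δ := by
        gcongr
        exact hb j
    _ = Real.exp c0.re / δ * Real.exp ((c1.re - y*s) * j - (y*m) * j^2) := by
        rw [div_mul_eq_mul_div, ← Real.exp_add, ← Real.exp_add]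
        congr 2
        ring

def P1term (m s τ z1 z2 : ℂ) (j : ℤ) : ℂ :=
  Complex.exp (2 * Real.pi * Complex.I * (m * (j : ℂ) * (z1 + z2) + s * z1)) *
      qpow τ (m * (j : ℂ) ^ 2 + s * (j : ℂ)) / (1 - e2 z1 * qpow τ (j : ℂ))

def Gterm (m s τ z1 z2 : ℂ) (j : ℤ) : ℂ :=
  Complex.exp (2 * Real.pi * Complex.I * (m * (j : ℂ) * (z1 + z2) + s * z1)) *
      qpow τ (m * (j : ℂ) ^ 2 + s * (j : ℂ))

def P2term (m s τ z1 z2 : ℂ) (j : ℤ) : ℂ :=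
  Complex.exp (-(2 * Real.pi * Complex.I) * (m * (j : ℂ) * (z1 + z2) + s * z2)) *
      qpow τ (m * (j : ℂ) ^ 2 + s * (j : ℂ)) / (1 - e2 (-z2) * qpow τ (j : ℂ))

def G2term (m s τ z1 z2 : ℂ) (j : ℤ) : ℂ :=
  Complex.exp (-(2 * Real.pi * Complex.I) * (m * (j : ℂ) * (z1 + z2) + s * z2)) *
      qpow τ (m * (j : ℂ) ^ 2 + s * (j : ℂ))

private lemma phi1_eq_tsum (m s τ z1 z2 : ℂ) :
    Phi1 m s τ z1 z2 0 = ∑' j : ℤ, P1term m s τ z1 z2 j := by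
  simp [Phi1, P1term]

private lemma phi2_eq_tsum (m s τ z1 z2 : ℂ) :
    Phi2 m s τ z1 z2 0 = ∑' j : ℤ, P2term m s τ z1 z2 j := by
  simp [Phi2, P2term]

private lemma p1_ptwise (m s τ z1 z2 : ℂ) (j : ℤ) (hd : 1 - e2 z1 * qpow τ (j:ℂ) ≠ 0) :
    P1term m (s-1) τ z1 z2 j = P1term m s τ z1 z2 j + Gterm m (s-1) τ z1 z2 j := by
  have hkey : (Complex.exp (2 * Real.pi * Complex.I * (m * (j : ℂ) * (z1 + z2) + (s-1) * z1)) *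
      qpow τ (m * (j : ℂ) ^ 2 + (s-1) * (j : ℂ))) * (e2 z1 * qpow τ (j:ℂ)) =
      Complex.exp (2 * Real.pi * Complex.I * (m * (j : ℂ) * (z1 + z2) + s * z1)) *
        qpow τ (m * (j : ℂ) ^ 2 + s * (j : ℂ)) := by
    simp only [qpow, e2, ← Complex.exp_add]
    congr 1
    ring
  unfold P1term Gterm
  rw [div_add' _ _ _ hd]
  congr 1
  linear_combination hkey

private lemma p2_ptwise (m s τ z1 z2 : ℂ) (j : ℤ) (hd : 1 - e2 (-z2) * qpow τ (j:ℂ) ≠ 0) :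
    P2term m (s-1) τ z1 z2 j = P2term m s τ z1 z2 j + G2term m (s-1) τ z1 z2 j := by
  have hkey : (Complex.exp (-(2 * Real.pi * Complex.I) * (m * (j : ℂ) * (z1 + z2) + (s-1) * z2)) *
      qpow τ (m * (j : ℂ) ^ 2 + (s-1) * (j : ℂ))) * (e2 (-z2) * qpow τ (j:ℂ)) =
      Complex.exp (-(2 * Real.pi * Complex.I) * (m * (j : ℂ) * (z1 + z2) + s * z2)) *
        qpow τ (m * (j : ℂ) ^ 2 + s * (j : ℂ)) := by
    simp only [qpow, e2, ← Complex.exp_add]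
    congr 1
    ring
  unfold P2term G2term
  rw [div_add' _ _ _ hd]
  congr 1
  linear_combination hkey

private lemma g_theta (m s τ z1 z2 : ℂ) (hm : m ≠ 0) (j : ℤ) :
    Gterm m (s-1) τ z1 z2 j =
      (Complex.exp (Real.pi * Complex.I * (s-1) * (z1 - z2)) *
        qpow τ (-((s-1)^2) / (4*m))) *
      (Complex.exp (2 * Real.pi * Complex.I * (m * ((j : ℂ) + (s-1) / (2 * m)) * (z1+z2))) *
        qpow τ (m * ((j : ℂ) + (s-1) / (2 * m)) ^ 2)) := by
  simp only [Gterm, qpow, ← Complex.exp_add]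
  congr 1
  field_simp
  ring

private lemma g2_theta (m s τ z1 z2 : ℂ) (hm : m ≠ 0) (j : ℤ) :
    G2term m (s-1) τ z1 z2 (-j) =
      (Complex.exp (Real.pi * Complex.I * (s-1) * (z1 - z2)) *
        qpow τ (-((s-1)^2) / (4*m))) *
      (Complex.exp (2 * Real.pi * Complex.I * (m * ((j : ℂ) + (-(s-1)) / (2 * m)) * (z1+z2))) *
        qpow τ (m * ((j : ℂ) + (-(s-1)) / (2 * m)) ^ 2)) := by
  simp only [G2term, qpow, Int.cast_neg, ← Complex.exp_add]
  congr 1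
  field_simp
  ring

private lemma phi1_step_core (m s : ℂ) (hm : m ≠ 0) (τ z1 z2 : ℂ)
    (hd : ∀ j : ℤ, 1 - e2 z1 * qpow τ (j:ℂ) ≠ 0)
    (h1 : Summable (P1term m (s-1) τ z1 z2)) (h2 : Summable (P1term m s τ z1 z2)) :
    Phi1 m (s-1) τ z1 z2 0 = Phi1 m s τ z1 z2 0 +
      Complex.exp (Real.pi * Complex.I * (s-1) * (z1 - z2)) *
        qpow τ (-((s-1)^2) / (4*m)) * jTheta (s-1) m τ (z1+z2) := by
  have hG : Summable (Gterm m (s-1) τ z1 z2) := by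
    refine ((h1.sub h2).congr fun j => ?_)
    rw [p1_ptwise m s τ z1 z2 j (hd j)]
    ring
  rw [phi1_eq_tsum, phi1_eq_tsum,
    tsum_congr (fun j => p1_ptwise m s τ z1 z2 j (hd j)), Summable.tsum_add h2 hG]
  congr 1
  rw [tsum_congr (fun j => g_theta m s τ z1 z2 hm j), tsum_mul_left, jTheta]

private lemma phi2_step_core (m s : ℂ) (hm : m ≠ 0) (τ z1 z2 : ℂ)
    (hd : ∀ j : ℤ, 1 - e2 (-z2) * qpow τ (j:ℂ) ≠ 0)
    (h1 : Summable (P2term m (s-1) τ z1 z2)) (h2 : Summable (P2term m s τ z1 z2)) :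
    Phi2 m (s-1) τ z1 z2 0 = Phi2 m s τ z1 z2 0 +
      Complex.exp (Real.pi * Complex.I * (s-1) * (z1 - z2)) *
        qpow τ (-((s-1)^2) / (4*m)) * jTheta (-(s-1)) m τ (z1+z2) := by
  have hG : Summable (G2term m (s-1) τ z1 z2) := by
    refine ((h1.sub h2).congr fun j => ?_)
    rw [p2_ptwise m s τ z1 z2 j (hd j)]
    ring
  rw [phi2_eq_tsum, phi2_eq_tsum,
    tsum_congr (fun j => p2_ptwise m s τ z1 z2 j (hd j)), Summable.tsum_add h2 hG]
  congr 1
  rw [← (Equiv.neg ℤ).tsum_eq (G2term m (s-1) τ z1 z2)]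
  simp only [Equiv.neg_apply]
  rw [tsum_congr (fun j => g2_theta m s τ z1 z2 hm j), tsum_mul_left, jTheta]

private lemma summable_P1 (m : ℝ) (hm : 0 < m) (c : ℝ) (τ z1 z2 : ℂ) (hτ : 0 < τ.im)
    (hd : ∀ j : ℤ, 1 - e2 z1 * qpow τ (j:ℂ) ≠ 0) :
    Summable (P1term (m:ℂ) (c:ℂ) τ z1 z2) := by
  refine (summable_main m c hm τ hτ (2 * (Real.pi:ℂ) * Complex.I * (c:ℂ) * z1)
    (2 * (Real.pi:ℂ) * Complex.I * (m:ℂ) * (z1+z2)) z1 hd).congr fun j => ?_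
  unfold P1term
  rw [show (2 * (Real.pi:ℂ) * Complex.I * (m:ℂ) * (z1+z2)) * (j:ℂ) +
      2 * (Real.pi:ℂ) * Complex.I * (c:ℂ) * z1 =
      2 * (Real.pi:ℂ) * Complex.I * ((m:ℂ) * (j:ℂ) * (z1 + z2) + (c:ℂ) * z1) by ring]

private lemma summable_P2 (m : ℝ) (hm : 0 < m) (c : ℝ) (τ z1 z2 : ℂ) (hτ : 0 < τ.im)
    (hd : ∀ j : ℤ, 1 - e2 (-z2) * qpow τ (j:ℂ) ≠ 0) :
    Summable (P2term (m:ℂ) (c:ℂ) τ z1 z2) := by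
  refine (summable_main m c hm τ hτ (-(2 * (Real.pi:ℂ) * Complex.I) * (c:ℂ) * z2)
    (-(2 * (Real.pi:ℂ) * Complex.I) * (m:ℂ) * (z1+z2)) (-z2) hd).congr fun j => ?_
  unfold P2term
  rw [show (-(2 * (Real.pi:ℂ) * Complex.I) * (m:ℂ) * (z1+z2)) * (j:ℂ) +
      -(2 * (Real.pi:ℂ) * Complex.I) * (c:ℂ) * z2 =
      -(2 * (Real.pi:ℂ) * Complex.I) * ((m:ℂ) * (j:ℂ) * (z1 + z2) + (c:ℂ) * z2) by ring]

private lemma phi1_step (m : ℝ) (hm : 0 < m) (c : ℝ) (τ z1 z2 : ℂ) (hτ : 0 < τ.im)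
    (hd : ∀ j : ℤ, 1 - e2 z1 * qpow τ (j:ℂ) ≠ 0) :
    Phi1 (m:ℂ) ((c:ℂ)-1) τ z1 z2 0 = Phi1 (m:ℂ) (c:ℂ) τ z1 z2 0 +
      Complex.exp (Real.pi * Complex.I * ((c:ℂ)-1) * (z1 - z2)) *
        qpow τ (-(((c:ℂ)-1)^2) / (4*(m:ℂ))) * jTheta ((c:ℂ)-1) (m:ℂ) τ (z1+z2) := by
  have hmc : (m:ℂ) ≠ 0 := by exact_mod_cast hm.ne'
  have h1 := summable_P1 m hm (c-1) τ z1 z2 hτ hd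
  rw [show ((c-1:ℝ):ℂ) = (c:ℂ)-1 by push_cast; ring] at h1
  exact phi1_step_core (m:ℂ) (c:ℂ) hmc τ z1 z2 hd h1 (summable_P1 m hm c τ z1 z2 hτ hd)

private lemma phi2_step (m : ℝ) (hm : 0 < m) (c : ℝ) (τ z1 z2 : ℂ) (hτ : 0 < τ.im)
    (hd : ∀ j : ℤ, 1 - e2 (-z2) * qpow τ (j:ℂ) ≠ 0) :
    Phi2 (m:ℂ) ((c:ℂ)-1) τ z1 z2 0 = Phi2 (m:ℂ) (c:ℂ) τ z1 z2 0 +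
      Complex.exp (Real.pi * Complex.I * ((c:ℂ)-1) * (z1 - z2)) *
        qpow τ (-(((c:ℂ)-1)^2) / (4*(m:ℂ))) * jTheta (-((c:ℂ)-1)) (m:ℂ) τ (z1+z2) := by
  have hmc : (m:ℂ) ≠ 0 := by exact_mod_cast hm.ne'
  have h1 := summable_P2 m hm (c-1) τ z1 z2 hτ hd
  rw [show ((c-1:ℝ):ℂ) = (c:ℂ)-1 by push_cast; ring] at h1
  exact phi2_step_core (m:ℂ) (c:ℂ) hmc τ z1 z2 hd h1 (summable_P2 m hm c τ z1 z2 hτ hd)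

private lemma phi1_shift (m s : ℝ) (hm : 0 < m) (τ z1 z2 : ℂ) (hτ : 0 < τ.im)
    (hd : ∀ j : ℤ, 1 - e2 z1 * qpow τ (j:ℂ) ≠ 0) (n : ℕ) :
    Phi1 (m:ℂ) ((s:ℂ) - ((n:ℂ)+1)) τ z1 z2 0 = Phi1 (m:ℂ) (s:ℂ) τ z1 z2 0 +
      ∑ k ∈ Finset.Icc (-(n:ℤ)-1) (-1),
        Complex.exp (Real.pi * Complex.I * ((s:ℂ) + (k:ℂ)) * (z1 - z2)) *
          qpow τ (-(((s:ℂ) + (k:ℂ))^2) / (4*(m:ℂ))) *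
          jTheta ((s:ℂ) + (k:ℂ)) (m:ℂ) τ (z1+z2) := by
  induction n with
  | zero =>
    have h := phi1_step m hm s τ z1 z2 hτ hd
    rw [show (s:ℂ) - (((0:ℕ):ℂ)+1) = (s:ℂ) - 1 by norm_num, h]
    rw [show (-((0:ℕ):ℤ)-1 : ℤ) = -1 by simp, Finset.Icc_self, Finset.sum_singleton]
    rw [show (s:ℂ) + ((-1:ℤ):ℂ) = (s:ℂ) - 1 by push_cast; ring]
  | succ n ih =>
    have harg : (s:ℂ) - (((n+1:ℕ):ℂ)+1) = ((s - ((n:ℝ)+1) : ℝ):ℂ) - 1 := by push_cast; ring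
    rw [harg, phi1_step m hm (s - ((n:ℝ)+1)) τ z1 z2 hτ hd,
      show ((s - ((n:ℝ)+1) : ℝ):ℂ) = (s:ℂ) - ((n:ℂ)+1) by push_cast; ring, ih]
    have hins : Finset.Icc (-((n:ℤ)+1)-1) (-1) =
        insert (-(n:ℤ)-2) (Finset.Icc (-(n:ℤ)-1) (-1)) := by
      ext x
      simp only [Finset.mem_Icc, Finset.mem_insert]
      omega
    rw [show (-((n+1:ℕ):ℤ)-1 : ℤ) = -((n:ℤ)+1)-1 by push_cast; ring, hins,
      Finset.sum_insert (by simp only [Finset.mem_Icc]; omega)]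
    rw [show (s:ℂ) + ((-(n:ℤ)-2 : ℤ):ℂ) = (s:ℂ) - ((n:ℂ)+1) - 1 by push_cast; ring]
    ring

private lemma phi2_shift (m s : ℝ) (hm : 0 < m) (τ z1 z2 : ℂ) (hτ : 0 < τ.im)
    (hd : ∀ j : ℤ, 1 - e2 (-z2) * qpow τ (j:ℂ) ≠ 0) (n : ℕ) :
    Phi2 (m:ℂ) ((s:ℂ) - ((n:ℂ)+1)) τ z1 z2 0 = Phi2 (m:ℂ) (s:ℂ) τ z1 z2 0 +
      ∑ k ∈ Finset.Icc (-(n:ℤ)-1) (-1),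
        Complex.exp (Real.pi * Complex.I * ((s:ℂ) + (k:ℂ)) * (z1 - z2)) *
          qpow τ (-(((s:ℂ) + (k:ℂ))^2) / (4*(m:ℂ))) *
          jTheta (-((s:ℂ) + (k:ℂ))) (m:ℂ) τ (z1+z2) := by
  induction n with
  | zero =>
    have h := phi2_step m hm s τ z1 z2 hτ hd
    rw [show (s:ℂ) - (((0:ℕ):ℂ)+1) = (s:ℂ) - 1 by norm_num, h]
    rw [show (-((0:ℕ):ℤ)-1 : ℤ) = -1 by simp, Finset.Icc_self, Finset.sum_singleton]
    rw [show (s:ℂ) + ((-1:ℤ):ℂ) = (s:ℂ) - 1 by push_cast; ring]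
  | succ n ih =>
    have harg : (s:ℂ) - (((n+1:ℕ):ℂ)+1) = ((s - ((n:ℝ)+1) : ℝ):ℂ) - 1 := by push_cast; ring
    rw [harg, phi2_step m hm (s - ((n:ℝ)+1)) τ z1 z2 hτ hd,
      show ((s - ((n:ℝ)+1) : ℝ):ℂ) = (s:ℂ) - ((n:ℂ)+1) by push_cast; ring, ih]
    have hins : Finset.Icc (-((n:ℤ)+1)-1) (-1) =
        insert (-(n:ℤ)-2) (Finset.Icc (-(n:ℤ)-1) (-1)) := by
      ext x
      simp only [Finset.mem_Icc, Finset.mem_insert]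
      omega
    rw [show (-((n+1:ℕ):ℤ)-1 : ℤ) = -((n:ℤ)+1)-1 by push_cast; ring, hins,
      Finset.sum_insert (by simp only [Finset.mem_Icc]; omega)]
    rw [show (s:ℂ) + ((-(n:ℤ)-2 : ℤ):ℂ) = (s:ℂ) - ((n:ℂ)+1) - 1 by push_cast; ring]
    ring

theorem statement0 (m s : ℝ) (hm : ∃ n : ℕ, 0 < n ∧ m = n / 2)
    (hs : ∃ a : ℤ, s = a / 2) (j : ℤ) (hj : j < 0)
    (τ : ℂ) (hτ : 0 < τ.im) (z1 z2 : ℂ)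
    (hz1 : ¬ InLattice τ z1) (hz2 : ¬ InLattice τ z2) :
    (Phi1 (m : ℂ) ((s : ℂ) + (j : ℂ)) τ z1 z2 0 =
      Phi1 (m : ℂ) (s : ℂ) τ z1 z2 0 +
        ∑ k ∈ Finset.Icc j (-1),
          Complex.exp (Real.pi * Complex.I * ((s : ℂ) + (k : ℂ)) * (z1 - z2)) *
            qpow τ (-(((s : ℂ) + (k : ℂ)) ^ 2) / (4 * (m : ℂ))) *
            jTheta ((s : ℂ) + (k : ℂ)) (m : ℂ) τ (z1 + z2)) ∧
    (Phi2 (m : ℂ) ((s : ℂ) + (j : ℂ)) τ z1 z2 0 =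
      Phi2 (m : ℂ) (s : ℂ) τ z1 z2 0 +
        ∑ k ∈ Finset.Icc j (-1),
          Complex.exp (Real.pi * Complex.I * ((s : ℂ) + (k : ℂ)) * (z1 - z2)) *
            qpow τ (-(((s : ℂ) + (k : ℂ)) ^ 2) / (4 * (m : ℂ))) *
            jTheta (-((s : ℂ) + (k : ℂ))) (m : ℂ) τ (z1 + z2)) ∧
    (Phi (m : ℂ) ((s : ℂ) + (j : ℂ)) τ z1 z2 0 =
      Phi (m : ℂ) (s : ℂ) τ z1 z2 0 +
        ∑ k ∈ Finset.Icc j (-1),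
          Complex.exp (Real.pi * Complex.I * ((s : ℂ) + (k : ℂ)) * (z1 - z2)) *
            qpow τ (-(((s : ℂ) + (k : ℂ)) ^ 2) / (4 * (m : ℂ))) *
            (jTheta ((s : ℂ) + (k : ℂ)) (m : ℂ) τ (z1 + z2) -
              jTheta (-((s : ℂ) + (k : ℂ))) (m : ℂ) τ (z1 + z2))) := by
  obtain ⟨N, hN0, hmEq⟩ := hm
  have hm0 : 0 < m := by
    have : (0:ℝ) < N := by exact_mod_cast hN0
    rw [hmEq]; linarith
  set n : ℕ := (-j-1).toNat with hn
  have hj2 : j = -((n:ℕ):ℤ)-1 := by omega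
  have hjC : (j:ℂ) = -((n:ℕ):ℂ)-1 := by
    rw [show (j:ℂ) = ((j:ℤ):ℂ) from rfl, hj2]; push_cast; ring
  have hs : (s:ℂ) + (j:ℂ) = (s:ℂ) - ((n:ℂ)+1) := by rw [hjC]; ring
  have hicc : Finset.Icc j (-1 : ℤ) = Finset.Icc (-(n:ℤ)-1) (-1) := by rw [hj2]
  have hd1 := denom_ne_of_not_lattice τ z1 hz1
  have hd2 := denom2_ne_of_not_lattice τ z2 hz2
  have H1 := phi1_shift m s hm0 τ z1 z2 hτ hd1 n
  have H2 := phi2_shift m s hm0 τ z1 z2 hτ hd2 n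
  refine ⟨?_, ?_, ?_⟩
  · rw [hs, hicc]; exact H1
  · rw [hs, hicc]; exact H2
  · unfold Phi
    rw [hs, hicc, H1, H2]
    rw [show ∑ k ∈ Finset.Icc (-(n:ℤ)-1) (-1),
        Complex.exp (Real.pi * Complex.I * ((s:ℂ) + (k:ℂ)) * (z1 - z2)) *
          qpow τ (-(((s:ℂ) + (k:ℂ))^2) / (4*(m:ℂ))) *
          (jTheta ((s:ℂ) + (k:ℂ)) (m:ℂ) τ (z1+z2) - jTheta (-((s:ℂ) + (k:ℂ))) (m:ℂ) τ (z1+z2)) =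
        (∑ k ∈ Finset.Icc (-(n:ℤ)-1) (-1),
          Complex.exp (Real.pi * Complex.I * ((s:ℂ) + (k:ℂ)) * (z1 - z2)) *
            qpow τ (-(((s:ℂ) + (k:ℂ))^2) / (4*(m:ℂ))) *
            jTheta ((s:ℂ) + (k:ℂ)) (m:ℂ) τ (z1+z2)) -
        ∑ k ∈ Finset.Icc (-(n:ℤ)-1) (-1),
          Complex.exp (Real.pi * Complex.I * ((s:ℂ) + (k:ℂ)) * (z1 - z2)) *
            qpow τ (-(((s:ℂ) + (k:ℂ))^2) / (4*(m:ℂ))) *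
            jTheta (-((s:ℂ) + (k:ℂ))) (m:ℂ) τ (z1+z2) from by
      rw [← Finset.sum_sub_distrib]
      exact Finset.sum_congr rfl fun k _ => by ring]
    ring


end Wakimoto
end
end

section
/- Let m be a positive half-integer, s a half-integer, p an integer, and i ∈ {1,2}. Then for all τ in the upper half-plane and z1, z2, t ∈ ℂ (with all denominators nonzero): Φ^{[m,s]}_i(τ, z1, z2+pτ, t) = e^{−2πimp(z1+z2)} Φ^{[m,s]}_i(τ, z1−pτ, z2, t). -/
open Complex

noncomputable section

namespace Wakimoto

private lemma shift_tsum (C : ℂ) (f g : ℤ → ℂ) (p : ℤ) (h : ∀ j, f j = C * g (j + p)) :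
    ∑' j, f j = C * ∑' j, g j := by
  rw [← ((Equiv.addRight p).tsum_eq g), ← tsum_mul_left]
  exact tsum_congr h

theorem statement5 (m s : ℝ) (hm : ∃ n : ℕ, 0 < n ∧ m = n / 2)
    (hs : ∃ a : ℤ, s = a / 2) (p : ℤ) (i : ℕ) (hi : i = 1 ∨ i = 2)
    (τ : ℂ) (hτ : 0 < τ.im) (z1 z2 t : ℂ)
    (hz1 : ¬ InLattice τ z1) (hz2 : ¬ InLattice τ z2) :
    (if i = 1 then Phi1 (m : ℂ) (s : ℂ) else Phi2 (m : ℂ) (s : ℂ))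
        τ z1 (z2 + (p : ℂ) * τ) t =
      Complex.exp (-(2 * Real.pi * Complex.I) * (m : ℂ) * (p : ℂ) * (z1 + z2)) *
        (if i = 1 then Phi1 (m : ℂ) (s : ℂ) else Phi2 (m : ℂ) (s : ℂ))
          τ (z1 - (p : ℂ) * τ) z2 t := by
  rcases hi with hi | hi <;> subst hi
  · show Phi1 (m:ℂ) (s:ℂ) τ z1 (z2 + (p:ℂ)*τ) t =
        Complex.exp (-(2 * Real.pi * Complex.I) * (m : ℂ) * (p : ℂ) * (z1 + z2)) *
          Phi1 (m:ℂ) (s:ℂ) τ (z1 - (p:ℂ)*τ) z2 t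
    unfold Phi1
    have key : (∑' j : ℤ,
        Complex.exp (2 * Real.pi * Complex.I * ((m:ℂ) * (j : ℂ) * (z1 + (z2 + (p:ℂ)*τ)) + (s:ℂ) * z1)) *
          qpow τ ((m:ℂ) * (j : ℂ) ^ 2 + (s:ℂ) * (j : ℂ)) / (1 - e2 z1 * qpow τ (j : ℂ)))
        = Complex.exp (-(2 * Real.pi * Complex.I) * (m : ℂ) * (p : ℂ) * (z1 + z2)) *
        ∑' j : ℤ,
        Complex.exp (2 * Real.pi * Complex.I * ((m:ℂ) * (j : ℂ) * ((z1 - (p:ℂ)*τ) + z2) + (s:ℂ) * (z1 - (p:ℂ)*τ))) *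
          qpow τ ((m:ℂ) * (j : ℂ) ^ 2 + (s:ℂ) * (j : ℂ)) / (1 - e2 (z1 - (p:ℂ)*τ) * qpow τ (j : ℂ)) := by
      refine shift_tsum _ _ _ p fun j => ?_
      have hden : (1 : ℂ) - e2 (z1 - (p:ℂ)*τ) * qpow τ ((j + p : ℤ) : ℂ)
          = 1 - e2 z1 * qpow τ (j : ℂ) := by
        rw [e2, e2, qpow, qpow, ← Complex.exp_add, ← Complex.exp_add]
        congr 2
        push_cast
        ring
      rw [hden, ← mul_div_assoc]
      congr 1
      rw [qpow, qpow, ← Complex.exp_add, ← Complex.exp_add, ← Complex.exp_add]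
      congr 1
      push_cast
      ring
    rw [key]
    ring
  · show Phi2 (m:ℂ) (s:ℂ) τ z1 (z2 + (p:ℂ)*τ) t =
        Complex.exp (-(2 * Real.pi * Complex.I) * (m : ℂ) * (p : ℂ) * (z1 + z2)) *
          Phi2 (m:ℂ) (s:ℂ) τ (z1 - (p:ℂ)*τ) z2 t
    unfold Phi2
    have key : (∑' j : ℤ,
        Complex.exp (-(2 * Real.pi * Complex.I) * ((m:ℂ) * (j : ℂ) * (z1 + (z2 + (p:ℂ)*τ)) + (s:ℂ) * (z2 + (p:ℂ)*τ))) *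
          qpow τ ((m:ℂ) * (j : ℂ) ^ 2 + (s:ℂ) * (j : ℂ)) / (1 - e2 (-(z2 + (p:ℂ)*τ)) * qpow τ (j : ℂ)))
        = Complex.exp (-(2 * Real.pi * Complex.I) * (m : ℂ) * (p : ℂ) * (z1 + z2)) *
        ∑' j : ℤ,
        Complex.exp (-(2 * Real.pi * Complex.I) * ((m:ℂ) * (j : ℂ) * ((z1 - (p:ℂ)*τ) + z2) + (s:ℂ) * z2)) *
          qpow τ ((m:ℂ) * (j : ℂ) ^ 2 + (s:ℂ) * (j : ℂ)) / (1 - e2 (-z2) * qpow τ (j : ℂ)) := by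
      refine shift_tsum _ _ _ (-p) fun j => ?_
      have hden : (1 : ℂ) - e2 (-z2) * qpow τ ((j + -p : ℤ) : ℂ)
          = 1 - e2 (-(z2 + (p:ℂ)*τ)) * qpow τ (j : ℂ) := by
        rw [e2, e2, qpow, qpow, ← Complex.exp_add, ← Complex.exp_add]
        congr 2
        push_cast
        ring
      rw [hden, ← mul_div_assoc]
      congr 1
      rw [qpow, qpow, ← Complex.exp_add, ← Complex.exp_add, ← Complex.exp_add]
      congr 1
      push_cast
      ring
    rw [key]
    ring

end Wakimoto
end
end

section
/- Let m be a positive half-integer, s a half-integer, p an integer, and let i, j ∈ {1,2} with i ≠ j. Then for all τ in the upper half-plane and z1, z2, t ∈ ℂ (with all denominators nonzero): Φ^{[m,s]}_i(τ, z1, z2+pτ, t) = e^{−2πimp(z1+z2)} Φ^{[m,s]}_j(τ, −z2, −z1+pτ, t). -/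
open Complex

noncomputable section

namespace Wakimoto

lemma div_congr_exp {a b c d : ℂ} (h1 : a = b) (h2 : c = d) :
    Complex.exp a / (1 - Complex.exp c) = Complex.exp b / (1 - Complex.exp d) := by
  rw [h1, h2]

lemma aux12 (m s : ℂ) (p : ℤ) (τ z1 z2 t : ℂ) :
    Phi1 m s τ z1 (z2 + (p : ℂ) * τ) t =
      Complex.exp (-(2 * Real.pi * Complex.I) * m * (p : ℂ) * (z1 + z2)) *
        Phi2 m s τ (-z2) (-z1 + (p : ℂ) * τ) t := by
  unfold Phi1 Phi2
  rw [mul_left_comm]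
  congr 1
  rw [← tsum_mul_left, ← (Equiv.subRight p).tsum_eq]
  refine tsum_congr fun j => ?_
  simp only [Equiv.subRight_apply, qpow, e2]
  push_cast
  rw [mul_div_assoc']
  simp only [← Complex.exp_add]
  exact div_congr_exp (by ring) (by ring)

lemma aux21 (m s : ℂ) (p : ℤ) (τ z1 z2 t : ℂ) :
    Phi2 m s τ z1 (z2 + (p : ℂ) * τ) t =
      Complex.exp (-(2 * Real.pi * Complex.I) * m * (p : ℂ) * (z1 + z2)) *
        Phi1 m s τ (-z2) (-z1 + (p : ℂ) * τ) t := by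
  unfold Phi1 Phi2
  rw [mul_left_comm]
  congr 1
  rw [← tsum_mul_left, ← (Equiv.addRight p).tsum_eq]
  refine tsum_congr fun j => ?_
  simp only [Equiv.coe_addRight, qpow, e2]
  push_cast
  rw [mul_div_assoc']
  simp only [← Complex.exp_add]
  exact div_congr_exp (by ring) (by ring)


theorem statement6 (m s : ℝ) (hm : ∃ n : ℕ, 0 < n ∧ m = n / 2)
    (hs : ∃ a : ℤ, s = a / 2) (p : ℤ) (i j : ℕ)
    (hi : i = 1 ∨ i = 2) (hj : j = 1 ∨ j = 2) (hij : i ≠ j)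
    (τ : ℂ) (hτ : 0 < τ.im) (z1 z2 t : ℂ)
    (hz1 : ¬ InLattice τ z1) (hz2 : ¬ InLattice τ z2) :
    (if i = 1 then Phi1 (m : ℂ) (s : ℂ) else Phi2 (m : ℂ) (s : ℂ))
        τ z1 (z2 + (p : ℂ) * τ) t =
      Complex.exp (-(2 * Real.pi * Complex.I) * (m : ℂ) * (p : ℂ) * (z1 + z2)) *
        (if j = 1 then Phi1 (m : ℂ) (s : ℂ) else Phi2 (m : ℂ) (s : ℂ))
          τ (-z2) (-z1 + (p : ℂ) * τ) t := by
  rcases hi with rfl | rfl <;> rcases hj with rfl | rfl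
  · exact absurd rfl hij
  · simpa using aux12 (m : ℂ) (s : ℂ) p τ z1 z2 t
  · simpa using aux21 (m : ℂ) (s : ℂ) p τ z1 z2 t
  · exact absurd rfl hij

end Wakimoto
end
end

section
/- Let m be a positive half-integer, s a half-integer, and p an integer. Then for all τ in the upper half-plane and z1, z2, t ∈ ℂ (with all denominators nonzero): Φ^{[m,s]}_i(τ, z1, z2+pτ, t) = e^{−2πimpz1} Φ^{[m,s+mp]}_i(τ, z1, z2, t) for i = 1, 2, and consequently Φ^{[m,s]}(τ, z1, z2+pτ, t) = e^{−2πimpz1} Φ^{[m,s+mp]}(τ, z1, z2, t). -/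
open Complex

noncomputable section

namespace Wakimoto

theorem statement7 (m s : ℝ) (hm : ∃ n : ℕ, 0 < n ∧ m = n / 2)
    (hs : ∃ a : ℤ, s = a / 2) (p : ℤ)
    (τ : ℂ) (hτ : 0 < τ.im) (z1 z2 t : ℂ)
    (hz1 : ¬ InLattice τ z1) (hz2 : ¬ InLattice τ z2) :
    (Phi1 (m : ℂ) (s : ℂ) τ z1 (z2 + (p : ℂ) * τ) t =
      Complex.exp (-(2 * Real.pi * Complex.I) * (m : ℂ) * (p : ℂ) * z1) *
        Phi1 (m : ℂ) ((s : ℂ) + (m : ℂ) * (p : ℂ)) τ z1 z2 t) ∧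
    (Phi2 (m : ℂ) (s : ℂ) τ z1 (z2 + (p : ℂ) * τ) t =
      Complex.exp (-(2 * Real.pi * Complex.I) * (m : ℂ) * (p : ℂ) * z1) *
        Phi2 (m : ℂ) ((s : ℂ) + (m : ℂ) * (p : ℂ)) τ z1 z2 t) ∧
    (Phi (m : ℂ) (s : ℂ) τ z1 (z2 + (p : ℂ) * τ) t =
      Complex.exp (-(2 * Real.pi * Complex.I) * (m : ℂ) * (p : ℂ) * z1) *
        Phi (m : ℂ) ((s : ℂ) + (m : ℂ) * (p : ℂ)) τ z1 z2 t) := by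
  have h1 : Phi1 (m : ℂ) (s : ℂ) τ z1 (z2 + (p : ℂ) * τ) t =
      Complex.exp (-(2 * Real.pi * Complex.I) * (m : ℂ) * (p : ℂ) * z1) *
        Phi1 (m : ℂ) ((s : ℂ) + (m : ℂ) * (p : ℂ)) τ z1 z2 t := by
    unfold Phi1
    rw [mul_left_comm]
    congr 1
    rw [← tsum_mul_left]
    refine tsum_congr fun j => ?_
    unfold qpow e2
    simp only [← mul_div_assoc, ← Complex.exp_add]
    congr 2
    push_cast
    ring
  have h2 : Phi2 (m : ℂ) (s : ℂ) τ z1 (z2 + (p : ℂ) * τ) t =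
      Complex.exp (-(2 * Real.pi * Complex.I) * (m : ℂ) * (p : ℂ) * z1) *
        Phi2 (m : ℂ) ((s : ℂ) + (m : ℂ) * (p : ℂ)) τ z1 z2 t := by
    unfold Phi2
    rw [mul_left_comm]
    congr 1
    rw [← tsum_mul_left]
    refine ((Equiv.addRight p).tsum_eq _).symm.trans (tsum_congr fun j => ?_)
    simp only [Equiv.coe_addRight]
    unfold qpow e2
    simp only [← mul_div_assoc, ← Complex.exp_add]
    congr 1
    · congr 1
      push_cast
      ring
    · congr 2
      push_cast
      ring
  exact ⟨h1, h2, by unfold Phi; rw [h1, h2]; ring⟩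

end Wakimoto
end
end

section
/- Let m be a positive half-integer. Then for all τ in the upper half-plane and z1, z2, z3 ∈ ℂ such that none of z1, z2, z3, z1−z2−z3 lies in ℤ + ℤτ, the following identity holds: Σ_{j∈ℤ} q^{(m+1)j²} e^{−2πij(z1−z2)+2πijm(z1−z3)} Φ^{[m,0]}(τ, z1, −z3+2jτ, 0) − Σ_{j∈ℤ} q^{(m+1)j²} e^{2πij(z1−z2)+2πijm(z1−z3)} Φ^{[m,0]}(τ, z2, z1−z2−z3+2jτ, 0) = Σ_{j∈ℤ} q^{(m+1)j²} e^{2πij(z1−z2)−2πijm(z1−z3)} Φ^{[1,0]}(τ, z1, −z2+2jτ, 0) − Σ_{j∈ℤ} q^{(m+1)j²} e^{2πij(z1−z2)+2πijm(z1−z3)} Φ^{[1,0]}(τ, z3, z1−z2−z3+2jτ, 0). -/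
open Complex

noncomputable section

namespace Wakimoto

lemma re2pi (x : ℂ) : (2 * (Real.pi : ℂ) * Complex.I * x).re = -(2 * Real.pi) * x.im := by
  simp [Complex.mul_re, Complex.mul_im]

lemma e2_qpow_int (τ w : ℂ) (n : ℤ) :
    e2 w * qpow τ (n : ℂ) = Complex.exp (2 * (Real.pi:ℂ) * Complex.I * (w + (n:ℂ) * τ)) := by
  rw [e2, qpow, ← Complex.exp_add]; congr 1; push_cast; ring

lemma norm_exp2pi (x : ℂ) : ‖Complex.exp (2 * (Real.pi:ℂ) * Complex.I * x)‖
    = Real.exp (-(2 * Real.pi) * x.im) := by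
  rw [Complex.norm_exp, re2pi]

lemma denom_ne (τ w : ℂ) (hw : ¬ InLattice τ w) (n : ℤ) :
    1 - e2 w * qpow τ (n : ℂ) ≠ 0 := by
  rw [e2_qpow_int]
  intro h
  have h1 : Complex.exp (2 * (Real.pi:ℂ) * Complex.I * (w + (n:ℂ) * τ)) = 1 := by
    linear_combination -h
  rw [Complex.exp_eq_one_iff] at h1
  obtain ⟨k, hk⟩ := h1
  apply hw
  refine ⟨k, -n, ?_⟩
  have hne : (2 * (Real.pi:ℂ) * Complex.I) ≠ 0 := by
    simp [Real.pi_ne_zero, Complex.I_ne_zero]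
  have h2 : w + (n:ℂ) * τ = (k:ℂ) := by
    apply mul_left_cancel₀ hne
    rw [hk]; ring
  push_cast
  linear_combination h2

lemma denom_lb (τ : ℂ) (hτ : 0 < τ.im) (w : ℂ) (hw : ¬ InLattice τ w) :
    ∃ δ : ℝ, 0 < δ ∧ ∀ n : ℤ, δ ≤ ‖1 - e2 w * qpow τ (n : ℂ)‖ := by
  set g : ℤ → ℝ := fun n => ‖1 - e2 w * qpow τ (n : ℂ)‖ with hg
  have hnorm : ∀ n : ℤ, ‖e2 w * qpow τ (n : ℂ)‖
      = Real.exp (-(2 * Real.pi) * (w.im + (n:ℝ) * τ.im)) := by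
    intro n
    rw [e2_qpow_int, norm_exp2pi]
    congr 2
    simp [Complex.add_im, Complex.mul_im]
  set A : ℤ := ⌊(-(1 / (2 * Real.pi)) - w.im) / τ.im⌋ with hA
  set B : ℤ := ⌈(1 / (2 * Real.pi) - w.im) / τ.im⌉ with hB
  have hpi : (0:ℝ) < 2 * Real.pi := by positivity
  -- large n : norm small
  have hgeB : ∀ n : ℤ, B ≤ n → ‖e2 w * qpow τ (n : ℂ)‖ ≤ 2⁻¹ := by
    intro n hn
    rw [hnorm]
    have h1 : (1 / (2 * Real.pi) - w.im) / τ.im ≤ (n:ℝ) := by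
      calc (1 / (2 * Real.pi) - w.im) / τ.im ≤ (B:ℝ) := Int.le_ceil _
        _ ≤ (n:ℝ) := by exact_mod_cast hn
    have h2 : 1 / (2 * Real.pi) - w.im ≤ (n:ℝ) * τ.im := by
      rw [div_le_iff₀ hτ] at h1; linarith
    have h3 : -(2 * Real.pi) * (w.im + (n:ℝ) * τ.im) ≤ -1 := by
      have : 1 / (2 * Real.pi) ≤ w.im + (n:ℝ) * τ.im := by linarith
      rw [div_le_iff₀ hpi] at this
      nlinarith
    calc Real.exp (-(2 * Real.pi) * (w.im + (n:ℝ) * τ.im)) ≤ Real.exp (-1) :=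
          Real.exp_le_exp.2 h3
      _ ≤ 2⁻¹ := by
          rw [Real.exp_neg]
          rw [inv_le_inv₀ (Real.exp_pos 1) (by norm_num)]
          have := Real.add_one_le_exp 1
          linarith
  have hleA : ∀ n : ℤ, n ≤ A → 2 ≤ ‖e2 w * qpow τ (n : ℂ)‖ := by
    intro n hn
    rw [hnorm]
    have h1 : (n:ℝ) ≤ (-(1 / (2 * Real.pi)) - w.im) / τ.im := by
      calc (n:ℝ) ≤ (A:ℝ) := by exact_mod_cast hn
        _ ≤ _ := Int.floor_le _
    have h2 : (n:ℝ) * τ.im ≤ -(1 / (2 * Real.pi)) - w.im := by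
      rw [le_div_iff₀ hτ] at h1; linarith
    have h3 : (1:ℝ) ≤ -(2 * Real.pi) * (w.im + (n:ℝ) * τ.im) := by
      have : w.im + (n:ℝ) * τ.im ≤ -(1 / (2 * Real.pi)) := by linarith
      have h4 : (1:ℝ) / (2 * Real.pi) ≤ -(w.im + (n:ℝ) * τ.im) := by linarith
      rw [div_le_iff₀ hpi] at h4
      nlinarith
    calc (2:ℝ) ≤ Real.exp 1 := by have := Real.add_one_le_exp 1; linarith
      _ ≤ _ := Real.exp_le_exp.2 h3
  set T : Finset ℤ := insert 0 (Finset.Icc A B) with hT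
  have hTne : T.Nonempty := ⟨0, by simp [hT]⟩
  have hgpos : ∀ n : ℤ, 0 < g n := by
    intro n
    simpa [hg] using norm_pos_iff.2 (denom_ne τ w hw n)
  refine ⟨min 2⁻¹ (T.inf' hTne g), ?_, ?_⟩
  · apply lt_min (by norm_num)
    rw [Finset.lt_inf'_iff]
    exact fun n _ => hgpos n
  · intro n
    by_cases hnT : n ∈ T
    · exact le_trans (min_le_right _ _) (Finset.inf'_le g hnT)
    · have hnot : ¬ (A ≤ n ∧ n ≤ B) := by
        intro ⟨h1, h2⟩; exact hnT (by simp [hT, Finset.mem_Icc]; omega)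
      rcases not_and_or.1 hnot with h | h
      · -- n < A
        have h1 : 2 ≤ ‖e2 w * qpow τ (n : ℂ)‖ := hleA n (by omega)
        have h2 : ‖e2 w * qpow τ (n : ℂ)‖ - ‖(1:ℂ)‖ ≤ g n := by
          rw [hg]
          calc _ ≤ ‖e2 w * qpow τ (n:ℂ) - 1‖ := norm_sub_norm_le _ _
            _ = _ := by rw [norm_sub_rev]
        simp only [norm_one] at h2
        calc min 2⁻¹ (T.inf' hTne g) ≤ 2⁻¹ := min_le_left _ _
          _ ≤ g n := by linarith
      · have h1 : ‖e2 w * qpow τ (n : ℂ)‖ ≤ 2⁻¹ := hgeB n (by omega)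
        have h2 : ‖(1:ℂ)‖ - ‖e2 w * qpow τ (n : ℂ)‖ ≤ g n := norm_sub_norm_le _ _
        simp only [norm_one] at h2
        calc min 2⁻¹ (T.inf' hTne g) ≤ 2⁻¹ := min_le_left _ _
          _ ≤ g n := by linarith

lemma summable_exp_quad_nat (c A : ℝ) (hc : 0 < c) :
    Summable fun n : ℕ => Real.exp (-c * (n:ℝ) ^ 2 + A * (n:ℝ)) := by
  have key : ∀ n : ℕ, Real.exp (-c * (n:ℝ) ^ 2 + A * (n:ℝ))
      ≤ Real.exp ((A + 1) ^ 2 / (4 * c)) * Real.exp (-(1:ℝ)) ^ n := by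
    intro n
    rw [← Real.exp_nat_mul, ← Real.exp_add]
    apply Real.exp_le_exp.2
    have hc4 : (0:ℝ) < 4 * c := by linarith
    have ht : (A + 1) ^ 2 / (4 * c) * (4 * c) = (A + 1) ^ 2 :=
      div_mul_cancel₀ _ (ne_of_gt hc4)
    nlinarith [sq_nonneg (2 * c * (n:ℝ) - (A + 1)), hc4, ht]
  apply Summable.of_nonneg_of_le (fun n => (Real.exp_pos _).le) key
  apply Summable.mul_left
  exact summable_geometric_of_lt_one (Real.exp_pos _).le
    (by rw [Real.exp_lt_one_iff]; norm_num)

lemma summable_exp_quad (c A : ℝ) (hc : 0 < c) :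
    Summable fun n : ℤ => Real.exp (-c * (n:ℝ) ^ 2 + A * |(n:ℝ)|) := by
  apply Summable.of_nat_of_neg
  · apply (summable_exp_quad_nat c A hc).congr
    intro n; congr 1; rw [Int.cast_natCast, _root_.abs_of_nonneg (by positivity : (0:ℝ) ≤ (n:ℝ))]
  · apply (summable_exp_quad_nat c A hc).congr
    intro n
    congr 1
    push_cast
    rw [abs_neg, _root_.abs_of_nonneg (by positivity : (0:ℝ) ≤ (n:ℝ))]
    ring

lemma summable_major (c1 c2 A B : ℝ) (h1 : 0 < c1) (h2 : 0 < c2) :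
    Summable fun p : ℤ × ℤ =>
      Real.exp (-c1 * (p.1:ℝ) ^ 2 + A * |(p.1:ℝ)|) * Real.exp (-c2 * (p.2:ℝ) ^ 2 + B * |(p.2:ℝ)|) := by
  apply Summable.mul_of_nonneg (summable_exp_quad c1 A h1) (summable_exp_quad c2 B h2) <;>
    · intro x
      exact (Real.exp_pos _).le

lemma quad_lb (m : ℝ) (hm : 0 < m) (x y : ℝ) :
    min m 1 / 8 * (x ^ 2 + y ^ 2) ≤ x ^ 2 + m * (x + y) ^ 2 := by
  have hμ1 : min m 1 ≤ 1 := min_le_right m 1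
  have hμm : min m 1 ≤ m := min_le_left m 1
  have hμ0 : 0 < min m 1 := lt_min hm one_pos
  rcases le_or_gt (y ^ 2) (4 * x ^ 2) with h | h
  · nlinarith [mul_nonneg hm.le (sq_nonneg (x + y))]
  · have h4 : (y / 2) ^ 2 ≤ (x + y) ^ 2 := by nlinarith [sq_nonneg (2 * x + y)]
    have hmul := mul_le_mul_of_nonneg_left h4 hm.le
    have e1 := mul_le_mul_of_nonneg_right hμ1 (sq_nonneg x)
    have e2 := mul_le_mul_of_nonneg_right hμm (sq_nonneg y)
    have e3 := mul_nonneg hm.le (sq_nonneg y)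
    have e4 := sq_nonneg x
    linarith

/-- The generic double-indexed family of terms. -/
def fam (τ : ℂ) (a b d : ℝ) (u v w : ℂ) (c : ℤ) (p : ℤ × ℤ) : ℂ :=
  Complex.exp (2 * (Real.pi:ℂ) * Complex.I *
      (((a : ℂ) * (p.1:ℂ) ^ 2 + (b : ℂ) * (p.2:ℂ) ^ 2 + (d : ℂ) * (p.1:ℂ) * (p.2:ℂ)) * τ
        + (p.1:ℂ) * u + (p.2:ℂ) * v)) /
    (1 - e2 w * qpow τ ((p.2 + c * p.1 : ℤ) : ℂ))

lemma im_part (a b d : ℝ) (j k : ℤ) (τ u v : ℂ) :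
    ((((a:ℂ) * (j:ℂ) ^ 2 + (b:ℂ) * (k:ℂ) ^ 2 + (d:ℂ) * (j:ℂ) * (k:ℂ)) * τ
        + (j:ℂ) * u + (k:ℂ) * v)).im
      = (a * (j:ℝ) ^ 2 + b * (k:ℝ) ^ 2 + d * (j:ℝ) * (k:ℝ)) * τ.im
        + (j:ℝ) * u.im + (k:ℝ) * v.im := by
  have h1 : ((a:ℂ) * (j:ℂ) ^ 2 + (b:ℂ) * (k:ℂ) ^ 2 + (d:ℂ) * (j:ℂ) * (k:ℂ))
      = ((a * (j:ℝ) ^ 2 + b * (k:ℝ) ^ 2 + d * (j:ℝ) * (k:ℝ) : ℝ) : ℂ) := by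
    push_cast; ring
  rw [h1]
  simp [Complex.add_im, Complex.mul_im, pow_two, Complex.mul_re]

lemma summable_fam (τ : ℂ) (hτ : 0 < τ.im) (a b d : ℝ) (u v w : ℂ) (c : ℤ) (ε : ℝ)
    (hε : 0 < ε) (hq : ∀ x y : ℝ, ε * (x ^ 2 + y ^ 2) ≤ a * x ^ 2 + b * y ^ 2 + d * x * y)
    (hw : ¬ InLattice τ w) : Summable (fam τ a b d u v w c) := by
  obtain ⟨δ, hδ, hlb⟩ := denom_lb τ hτ w hw
  set c' : ℝ := 2 * Real.pi * ε * τ.im with hc'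
  have hc'0 : 0 < c' := by have := Real.pi_pos; positivity
  apply Summable.of_norm_bounded
    (g := fun p : ℤ × ℤ => (Real.exp (-c' * (p.1:ℝ) ^ 2 + 2 * Real.pi * |u.im| * |(p.1:ℝ)|) *
      Real.exp (-c' * (p.2:ℝ) ^ 2 + 2 * Real.pi * |v.im| * |(p.2:ℝ)|)) / δ)
  · exact (summable_major c' c' _ _ hc'0 hc'0).div_const δ
  · rintro ⟨j, k⟩
    rw [fam, norm_div, norm_exp2pi, im_part]
    apply div_le_div₀ (by positivity) ?_ hδ (hlb _)
    rw [← Real.exp_add]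
    apply Real.exp_le_exp.2
    have hπ : (0:ℝ) < 2 * Real.pi := by positivity
    have hQ := hq (j:ℝ) (k:ℝ)
    have h1 : (2 * Real.pi) * (ε * ((j:ℝ) ^ 2 + (k:ℝ) ^ 2) * τ.im)
        ≤ (2 * Real.pi) * ((a * (j:ℝ) ^ 2 + b * (k:ℝ) ^ 2 + d * (j:ℝ) * (k:ℝ)) * τ.im) := by
      apply mul_le_mul_of_nonneg_left _ hπ.le
      exact mul_le_mul_of_nonneg_right hQ hτ.le
    have h2 : -((j:ℝ) * u.im) ≤ |(j:ℝ)| * |u.im| := by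
      rw [← abs_mul]; exact neg_le_abs _
    have h3 : -((k:ℝ) * v.im) ≤ |(k:ℝ)| * |v.im| := by
      rw [← abs_mul]; exact neg_le_abs _
    have h4 := mul_le_mul_of_nonneg_left h2 hπ.le
    have h5 := mul_le_mul_of_nonneg_left h3 hπ.le
    rw [hc']
    nlinarith [h1, h4, h5]

lemma tsum_helper {C : ℤ → ℂ} {g : ℤ → ℤ → ℂ} {F : ℤ × ℤ → ℂ} (hF : Summable F)
    (h : ∀ j k : ℤ, C j * g j k = F (j, k)) :
    Summable (fun j : ℤ => C j * ∑' k : ℤ, g j k)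
      ∧ (∑' j : ℤ, C j * ∑' k : ℤ, g j k) = ∑' p : ℤ × ℤ, F p := by
  have hj : ∀ j : ℤ, (C j * ∑' k : ℤ, g j k) = ∑' k : ℤ, F (j, k) := by
    intro j
    rw [← tsum_mul_left]
    exact tsum_congr (h j)
  constructor
  · exact (hF.prod).congr (fun j => (hj j).symm)
  · rw [tsum_congr hj, ← hF.tsum_prod]

def psiA : ℤ × ℤ ≃ ℤ × ℤ where
  toFun p := (-(p.1 + p.2), p.2)
  invFun p := (-(p.1 + p.2), p.2)
  left_inv p := by simp [Prod.ext_iff]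
  right_inv p := by simp [Prod.ext_iff]

def psiB : ℤ × ℤ ≃ ℤ × ℤ where
  toFun p := (-(p.1 + p.2), -2 * p.1 - p.2)
  invFun p := (p.1 - p.2, p.2 - 2 * p.1)
  left_inv p := by simp [Prod.ext_iff]; constructor <;> ring
  right_inv p := by simp [Prod.ext_iff]; constructor <;> ring

def psiC : ℤ × ℤ ≃ ℤ × ℤ where
  toFun p := (p.1 - p.2, -p.2)
  invFun p := (p.1 - p.2, -p.2)
  left_inv p := by simp [Prod.ext_iff]
  right_inv p := by simp [Prod.ext_iff]

lemma pair_eq {fL fR : ℤ × ℤ → ℂ} (ψ : ℤ × ℤ ≃ ℤ × ℤ) (h : ∀ p, fL (ψ p) = fR p) :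
    ∑' p, fL p = ∑' p, fR p :=
  (Equiv.tsum_eq ψ fL).symm.trans (tsum_congr h)

def gphi1 (τ M Z W : ℂ) (k : ℤ) : ℂ :=
  Complex.exp (2 * Real.pi * Complex.I * (M * (k:ℂ) * (Z + W))) * qpow τ (M * (k:ℂ) ^ 2) /
    (1 - e2 Z * qpow τ (k:ℂ))

def gphi2 (τ M Z W : ℂ) (k : ℤ) : ℂ :=
  Complex.exp (-(2 * Real.pi * Complex.I) * (M * (k:ℂ) * (Z + W))) * qpow τ (M * (k:ℂ) ^ 2) /
    (1 - e2 (-W) * qpow τ (k:ℂ))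

lemma hPhi (τ M Z W : ℂ) : Phi M 0 τ Z W 0 =
    (∑' k : ℤ, gphi1 τ M Z W k) - ∑' k : ℤ, gphi2 τ M Z W k := by
  rw [Phi, Phi1, Phi2]
  simp only [gphi1, gphi2, mul_zero, zero_mul, add_zero, Complex.exp_zero, one_mul]

lemma hPhiMul (τ A M Z W : ℂ) : A * Phi M 0 τ Z W 0 =
    A * (∑' k : ℤ, gphi1 τ M Z W k) - A * ∑' k : ℤ, gphi2 τ M Z W k := by
  rw [hPhi]; ring

lemma exp_div_helper {P P' Q Q' : ℂ} (h1 : P = P') (h2 : Q = Q') :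
    Complex.exp P / (1 - Complex.exp Q) = Complex.exp P' / (1 - Complex.exp Q') := by
  rw [h1, h2]

theorem statement10 (m : ℝ) (hm : ∃ n : ℕ, 0 < n ∧ m = n / 2)
    (τ : ℂ) (hτ : 0 < τ.im) (z1 z2 z3 : ℂ)
    (h1 : ¬ InLattice τ z1) (h2 : ¬ InLattice τ z2) (h3 : ¬ InLattice τ z3)
    (h4 : ¬ InLattice τ (z1 - z2 - z3)) :
    (∑' j : ℤ, qpow τ (((m : ℂ) + 1) * (j : ℂ) ^ 2) *
        Complex.exp (2 * Real.pi * Complex.I *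
          (-(j : ℂ) * (z1 - z2) + (j : ℂ) * (m : ℂ) * (z1 - z3))) *
        Phi (m : ℂ) 0 τ z1 (-z3 + 2 * (j : ℂ) * τ) 0) -
      (∑' j : ℤ, qpow τ (((m : ℂ) + 1) * (j : ℂ) ^ 2) *
        Complex.exp (2 * Real.pi * Complex.I *
          ((j : ℂ) * (z1 - z2) + (j : ℂ) * (m : ℂ) * (z1 - z3))) *
        Phi (m : ℂ) 0 τ z2 (z1 - z2 - z3 + 2 * (j : ℂ) * τ) 0) =
    (∑' j : ℤ, qpow τ (((m : ℂ) + 1) * (j : ℂ) ^ 2) *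
        Complex.exp (2 * Real.pi * Complex.I *
          ((j : ℂ) * (z1 - z2) - (j : ℂ) * (m : ℂ) * (z1 - z3))) *
        Phi 1 0 τ z1 (-z2 + 2 * (j : ℂ) * τ) 0) -
      (∑' j : ℤ, qpow τ (((m : ℂ) + 1) * (j : ℂ) ^ 2) *
        Complex.exp (2 * Real.pi * Complex.I *
          ((j : ℂ) * (z1 - z2) + (j : ℂ) * (m : ℂ) * (z1 - z3))) *
        Phi 1 0 τ z3 (z1 - z2 - z3 + 2 * (j : ℂ) * τ) 0) := by
  obtain ⟨n, hn, hmn⟩ := hm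
  have hm0 : (0:ℝ) < m := by
    have : (0:ℝ) < (n:ℝ) := by exact_mod_cast hn
    rw [hmn]; linarith
  have h4' : ¬ InLattice τ (z2 + z3 - z1) := by
    rintro ⟨a, b, hab⟩
    exact h4 ⟨-a, -b, by push_cast; linear_combination -hab⟩
  have hε : (0:ℝ) < min m 1 / 8 := by
    have := lt_min hm0 one_pos; linarith
  have hqa : ∀ x y : ℝ, min m 1 / 8 * (x ^ 2 + y ^ 2)
      ≤ (m + 1) * x ^ 2 + m * y ^ 2 + 2 * m * x * y := by
    intro x y; nlinarith [quad_lb m hm0 x y]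
  have hqb : ∀ x y : ℝ, min m 1 / 8 * (x ^ 2 + y ^ 2)
      ≤ (m + 1) * x ^ 2 + m * y ^ 2 + -(2 * m) * x * y := by
    intro x y; nlinarith [quad_lb m hm0 x (-y)]
  -- the four left-hand families
  have hF1 : Summable (fam τ (m+1) m (2*m) (-(z1-z2)+(m:ℂ)*(z1-z3)) ((m:ℂ)*(z1-z3)) z1 0) :=
    summable_fam τ hτ _ _ _ _ _ _ _ _ hε hqa h1
  have hF2 : Summable (fam τ (m+1) m (-(2*m)) (-(z1-z2)+(m:ℂ)*(z1-z3)) (-((m:ℂ)*(z1-z3))) z3 (-2)) :=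
    summable_fam τ hτ _ _ _ _ _ _ _ _ hε hqb h3
  have hF3 : Summable (fam τ (m+1) m (2*m) ((z1-z2)+(m:ℂ)*(z1-z3)) ((m:ℂ)*(z1-z3)) z2 0) :=
    summable_fam τ hτ _ _ _ _ _ _ _ _ hε hqa h2
  have hF4 : Summable (fam τ (m+1) m (-(2*m)) ((z1-z2)+(m:ℂ)*(z1-z3)) (-((m:ℂ)*(z1-z3))) (z2+z3-z1) (-2)) :=
    summable_fam τ hτ _ _ _ _ _ _ _ _ hε hqb h4'
  -- pair identifications
  have hp1 : ∀ p : ℤ × ℤ,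
      fam τ (m+1) m (2*m) (-(z1-z2)+(m:ℂ)*(z1-z3)) ((m:ℂ)*(z1-z3)) z1 0 (psiA p)
        = fam τ (m+1) 1 2 ((z1-z2)-(m:ℂ)*(z1-z3)) (z1-z2) z1 0 p := by
    rintro ⟨j, k⟩
    simp only [psiA, Equiv.coe_fn_mk, fam, qpow, e2, ← Complex.exp_add, ← mul_div_assoc]
    exact exp_div_helper (by push_cast; ring) (by push_cast; ring)
  have hp2 : ∀ p : ℤ × ℤ,
      fam τ (m+1) m (-(2*m)) (-(z1-z2)+(m:ℂ)*(z1-z3)) (-((m:ℂ)*(z1-z3))) z3 (-2) (psiB p)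
        = fam τ (m+1) 1 2 ((z1-z2)+(m:ℂ)*(z1-z3)) (z1-z2) z3 0 p := by
    rintro ⟨j, k⟩
    simp only [psiB, Equiv.coe_fn_mk, fam, qpow, e2, ← Complex.exp_add, ← mul_div_assoc]
    exact exp_div_helper (by push_cast; ring) (by push_cast; ring)
  have hp3 : ∀ p : ℤ × ℤ,
      fam τ (m+1) m (2*m) ((z1-z2)+(m:ℂ)*(z1-z3)) ((m:ℂ)*(z1-z3)) z2 0 (psiB.symm p)
        = fam τ (m+1) 1 (-2) ((z1-z2)-(m:ℂ)*(z1-z3)) (-(z1-z2)) z2 (-2) p := by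
    rintro ⟨j, k⟩
    simp only [psiB, Equiv.symm, Equiv.coe_fn_mk, fam, qpow, e2, ← Complex.exp_add,
      ← mul_div_assoc]
    exact exp_div_helper (by push_cast; ring) (by push_cast; ring)
  have hp4 : ∀ p : ℤ × ℤ,
      fam τ (m+1) m (-(2*m)) ((z1-z2)+(m:ℂ)*(z1-z3)) (-((m:ℂ)*(z1-z3))) (z2+z3-z1) (-2) (psiC p)
        = fam τ (m+1) 1 (-2) ((z1-z2)+(m:ℂ)*(z1-z3)) (-(z1-z2)) (z2+z3-z1) (-2) p := by
    rintro ⟨j, k⟩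
    simp only [psiC, Equiv.coe_fn_mk, fam, qpow, e2, ← Complex.exp_add, ← mul_div_assoc]
    exact exp_div_helper (by push_cast; ring) (by push_cast; ring)
  have hG1 : Summable (fam τ (m+1) 1 2 ((z1-z2)-(m:ℂ)*(z1-z3)) (z1-z2) z1 0) :=
    (psiA.summable_iff.2 hF1).congr hp1
  have hG3 : Summable (fam τ (m+1) 1 2 ((z1-z2)+(m:ℂ)*(z1-z3)) (z1-z2) z3 0) :=
    (psiB.summable_iff.2 hF2).congr hp2
  have hG2 : Summable (fam τ (m+1) 1 (-2) ((z1-z2)-(m:ℂ)*(z1-z3)) (-(z1-z2)) z2 (-2)) :=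
    (psiB.symm.summable_iff.2 hF3).congr hp3
  have hG4 : Summable (fam τ (m+1) 1 (-2) ((z1-z2)+(m:ℂ)*(z1-z3)) (-(z1-z2)) (z2+z3-z1) (-2)) :=
    (psiC.summable_iff.2 hF4).congr hp4
  -- expansions of the eight pieces
  have E1 : Summable (fun j : ℤ => qpow τ (((m : ℂ) + 1) * (j : ℂ) ^ 2) *
        Complex.exp (2 * Real.pi * Complex.I *
          (-(j : ℂ) * (z1 - z2) + (j : ℂ) * (m : ℂ) * (z1 - z3))) *
        ∑' k : ℤ, gphi1 τ (m:ℂ) z1 (-z3 + 2 * (j : ℂ) * τ) k) ∧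
      (∑' j : ℤ, qpow τ (((m : ℂ) + 1) * (j : ℂ) ^ 2) *
        Complex.exp (2 * Real.pi * Complex.I *
          (-(j : ℂ) * (z1 - z2) + (j : ℂ) * (m : ℂ) * (z1 - z3))) *
        ∑' k : ℤ, gphi1 τ (m:ℂ) z1 (-z3 + 2 * (j : ℂ) * τ) k)
        = ∑' p : ℤ × ℤ, fam τ (m+1) m (2*m) (-(z1-z2)+(m:ℂ)*(z1-z3)) ((m:ℂ)*(z1-z3)) z1 0 p := by
    refine tsum_helper hF1 ?_
    intro j k
    simp only [gphi1, fam, qpow, e2, ← Complex.exp_add, ← mul_div_assoc]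
    exact exp_div_helper (by push_cast; ring) (by push_cast; ring)
  have E2 : Summable (fun j : ℤ => qpow τ (((m : ℂ) + 1) * (j : ℂ) ^ 2) *
        Complex.exp (2 * Real.pi * Complex.I *
          (-(j : ℂ) * (z1 - z2) + (j : ℂ) * (m : ℂ) * (z1 - z3))) *
        ∑' k : ℤ, gphi2 τ (m:ℂ) z1 (-z3 + 2 * (j : ℂ) * τ) k) ∧
      (∑' j : ℤ, qpow τ (((m : ℂ) + 1) * (j : ℂ) ^ 2) *
        Complex.exp (2 * Real.pi * Complex.I *
          (-(j : ℂ) * (z1 - z2) + (j : ℂ) * (m : ℂ) * (z1 - z3))) *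
        ∑' k : ℤ, gphi2 τ (m:ℂ) z1 (-z3 + 2 * (j : ℂ) * τ) k)
        = ∑' p : ℤ × ℤ, fam τ (m+1) m (-(2*m)) (-(z1-z2)+(m:ℂ)*(z1-z3)) (-((m:ℂ)*(z1-z3))) z3 (-2) p := by
    refine tsum_helper hF2 ?_
    intro j k
    simp only [gphi2, fam, qpow, e2, ← Complex.exp_add, ← mul_div_assoc]
    exact exp_div_helper (by push_cast; ring) (by push_cast; ring)
  have E3 : Summable (fun j : ℤ => qpow τ (((m : ℂ) + 1) * (j : ℂ) ^ 2) *
        Complex.exp (2 * Real.pi * Complex.I *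
          ((j : ℂ) * (z1 - z2) + (j : ℂ) * (m : ℂ) * (z1 - z3))) *
        ∑' k : ℤ, gphi1 τ (m:ℂ) z2 (z1 - z2 - z3 + 2 * (j : ℂ) * τ) k) ∧
      (∑' j : ℤ, qpow τ (((m : ℂ) + 1) * (j : ℂ) ^ 2) *
        Complex.exp (2 * Real.pi * Complex.I *
          ((j : ℂ) * (z1 - z2) + (j : ℂ) * (m : ℂ) * (z1 - z3))) *
        ∑' k : ℤ, gphi1 τ (m:ℂ) z2 (z1 - z2 - z3 + 2 * (j : ℂ) * τ) k)
        = ∑' p : ℤ × ℤ, fam τ (m+1) m (2*m) ((z1-z2)+(m:ℂ)*(z1-z3)) ((m:ℂ)*(z1-z3)) z2 0 p := by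
    refine tsum_helper hF3 ?_
    intro j k
    simp only [gphi1, fam, qpow, e2, ← Complex.exp_add, ← mul_div_assoc]
    exact exp_div_helper (by push_cast; ring) (by push_cast; ring)
  have E4 : Summable (fun j : ℤ => qpow τ (((m : ℂ) + 1) * (j : ℂ) ^ 2) *
        Complex.exp (2 * Real.pi * Complex.I *
          ((j : ℂ) * (z1 - z2) + (j : ℂ) * (m : ℂ) * (z1 - z3))) *
        ∑' k : ℤ, gphi2 τ (m:ℂ) z2 (z1 - z2 - z3 + 2 * (j : ℂ) * τ) k) ∧
      (∑' j : ℤ, qpow τ (((m : ℂ) + 1) * (j : ℂ) ^ 2) *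
        Complex.exp (2 * Real.pi * Complex.I *
          ((j : ℂ) * (z1 - z2) + (j : ℂ) * (m : ℂ) * (z1 - z3))) *
        ∑' k : ℤ, gphi2 τ (m:ℂ) z2 (z1 - z2 - z3 + 2 * (j : ℂ) * τ) k)
        = ∑' p : ℤ × ℤ, fam τ (m+1) m (-(2*m)) ((z1-z2)+(m:ℂ)*(z1-z3)) (-((m:ℂ)*(z1-z3))) (z2+z3-z1) (-2) p := by
    refine tsum_helper hF4 ?_
    intro j k
    simp only [gphi2, fam, qpow, e2, ← Complex.exp_add, ← mul_div_assoc]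
    exact exp_div_helper (by push_cast; ring) (by push_cast; ring)
  have E5 : Summable (fun j : ℤ => qpow τ (((m : ℂ) + 1) * (j : ℂ) ^ 2) *
        Complex.exp (2 * Real.pi * Complex.I *
          ((j : ℂ) * (z1 - z2) - (j : ℂ) * (m : ℂ) * (z1 - z3))) *
        ∑' k : ℤ, gphi1 τ 1 z1 (-z2 + 2 * (j : ℂ) * τ) k) ∧
      (∑' j : ℤ, qpow τ (((m : ℂ) + 1) * (j : ℂ) ^ 2) *
        Complex.exp (2 * Real.pi * Complex.I *
          ((j : ℂ) * (z1 - z2) - (j : ℂ) * (m : ℂ) * (z1 - z3))) *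
        ∑' k : ℤ, gphi1 τ 1 z1 (-z2 + 2 * (j : ℂ) * τ) k)
        = ∑' p : ℤ × ℤ, fam τ (m+1) 1 2 ((z1-z2)-(m:ℂ)*(z1-z3)) (z1-z2) z1 0 p := by
    refine tsum_helper hG1 ?_
    intro j k
    simp only [gphi1, fam, qpow, e2, ← Complex.exp_add, ← mul_div_assoc]
    exact exp_div_helper (by push_cast; ring) (by push_cast; ring)
  have E6 : Summable (fun j : ℤ => qpow τ (((m : ℂ) + 1) * (j : ℂ) ^ 2) *
        Complex.exp (2 * Real.pi * Complex.I *
          ((j : ℂ) * (z1 - z2) - (j : ℂ) * (m : ℂ) * (z1 - z3))) *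
        ∑' k : ℤ, gphi2 τ 1 z1 (-z2 + 2 * (j : ℂ) * τ) k) ∧
      (∑' j : ℤ, qpow τ (((m : ℂ) + 1) * (j : ℂ) ^ 2) *
        Complex.exp (2 * Real.pi * Complex.I *
          ((j : ℂ) * (z1 - z2) - (j : ℂ) * (m : ℂ) * (z1 - z3))) *
        ∑' k : ℤ, gphi2 τ 1 z1 (-z2 + 2 * (j : ℂ) * τ) k)
        = ∑' p : ℤ × ℤ, fam τ (m+1) 1 (-2) ((z1-z2)-(m:ℂ)*(z1-z3)) (-(z1-z2)) z2 (-2) p := by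
    refine tsum_helper hG2 ?_
    intro j k
    simp only [gphi2, fam, qpow, e2, ← Complex.exp_add, ← mul_div_assoc]
    exact exp_div_helper (by push_cast; ring) (by push_cast; ring)
  have E7 : Summable (fun j : ℤ => qpow τ (((m : ℂ) + 1) * (j : ℂ) ^ 2) *
        Complex.exp (2 * Real.pi * Complex.I *
          ((j : ℂ) * (z1 - z2) + (j : ℂ) * (m : ℂ) * (z1 - z3))) *
        ∑' k : ℤ, gphi1 τ 1 z3 (z1 - z2 - z3 + 2 * (j : ℂ) * τ) k) ∧
      (∑' j : ℤ, qpow τ (((m : ℂ) + 1) * (j : ℂ) ^ 2) *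
        Complex.exp (2 * Real.pi * Complex.I *
          ((j : ℂ) * (z1 - z2) + (j : ℂ) * (m : ℂ) * (z1 - z3))) *
        ∑' k : ℤ, gphi1 τ 1 z3 (z1 - z2 - z3 + 2 * (j : ℂ) * τ) k)
        = ∑' p : ℤ × ℤ, fam τ (m+1) 1 2 ((z1-z2)+(m:ℂ)*(z1-z3)) (z1-z2) z3 0 p := by
    refine tsum_helper hG3 ?_
    intro j k
    simp only [gphi1, fam, qpow, e2, ← Complex.exp_add, ← mul_div_assoc]
    exact exp_div_helper (by push_cast; ring) (by push_cast; ring)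
  have E8 : Summable (fun j : ℤ => qpow τ (((m : ℂ) + 1) * (j : ℂ) ^ 2) *
        Complex.exp (2 * Real.pi * Complex.I *
          ((j : ℂ) * (z1 - z2) + (j : ℂ) * (m : ℂ) * (z1 - z3))) *
        ∑' k : ℤ, gphi2 τ 1 z3 (z1 - z2 - z3 + 2 * (j : ℂ) * τ) k) ∧
      (∑' j : ℤ, qpow τ (((m : ℂ) + 1) * (j : ℂ) ^ 2) *
        Complex.exp (2 * Real.pi * Complex.I *
          ((j : ℂ) * (z1 - z2) + (j : ℂ) * (m : ℂ) * (z1 - z3))) *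
        ∑' k : ℤ, gphi2 τ 1 z3 (z1 - z2 - z3 + 2 * (j : ℂ) * τ) k)
        = ∑' p : ℤ × ℤ, fam τ (m+1) 1 (-2) ((z1-z2)+(m:ℂ)*(z1-z3)) (-(z1-z2)) (z2+z3-z1) (-2) p := by
    refine tsum_helper hG4 ?_
    intro j k
    simp only [gphi2, fam, qpow, e2, ← Complex.exp_add, ← mul_div_assoc]
    exact exp_div_helper (by push_cast; ring) (by push_cast; ring)
  -- assemble
  simp only [hPhiMul]
  rw [E1.1.tsum_sub E2.1, E3.1.tsum_sub E4.1, E5.1.tsum_sub E6.1, E7.1.tsum_sub E8.1,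
    E1.2, E2.2, E3.2, E4.2, E5.2, E6.2, E7.2, E8.2,
    pair_eq psiA hp1, pair_eq psiB hp2, pair_eq psiB.symm hp3, pair_eq psiC hp4]
  ring

end Wakimoto
end
end
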